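/- Any private state is an independent state: for γ = U(|ψ⁺⟩⟨ψ⁺|_{AB} ⊗ σ_{A'B'})U† with twisting U = Σᵢ|ii⟩⟨ii|⊗Uᵢ, there exists a controlled unitary W = Σᵢ|i⟩⟨i|_A ⊗ Wᵢ (control on A alone, target BA'B') such that γ = W(|+⟩⟨+|_A ⊗ |0⟩⟨0|_B ⊗ σ_{A'B'})W†. -/

import Mathlib

open Matrix BigOperators Filter ComplexOrder

noncomputable section

def swapM (d : ℕ) : Matrix (Fin d × Fin d) (Fin d × Fin d) ℂ :=
  fun p q => if p.1 = q.2 ∧ p.2 = q.1 then 1 else 0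

def phiProj (d : ℕ) : Matrix (Fin d × Fin d) (Fin d × Fin d) ℂ :=
  fun p q => if p.1 = p.2 ∧ q.1 = q.2 then (d : ℂ)⁻¹ else 0

def ptB {d : ℕ} (ρ : Matrix (Fin d × Fin d) (Fin d × Fin d) ℂ) :
    Matrix (Fin d × Fin d) (Fin d × Fin d) ℂ :=
  fun p q => ρ (p.1, q.2) (q.1, p.2)

def rhoS (d : ℕ) : Matrix (Fin d × Fin d) (Fin d × Fin d) ℂ :=
  ((d : ℂ)^2 + (d : ℂ))⁻¹ • (1 + swapM d)

def rhoA (d : ℕ) : Matrix (Fin d × Fin d) (Fin d × Fin d) ℂ :=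
  ((d : ℂ)^2 - (d : ℂ))⁻¹ • (1 - swapM d)

def wernerT (d : ℕ) (θ : ℝ) : Matrix (Fin d × Fin d) (Fin d × Fin d) ℂ :=
  ((1 - θ : ℝ) : ℂ) • rhoS d + ((θ : ℝ) : ℂ) • rhoA d

def wernerA (d : ℕ) (α : ℝ) : Matrix (Fin d × Fin d) (Fin d × Fin d) ℂ :=
  (((1 + α) / 2 : ℝ) : ℂ) • rhoS d + (((1 - α) / 2 : ℝ) : ℂ) • rhoA d

def trB {dA dB : ℕ} (ρ : Matrix (Fin dA × Fin dB) (Fin dA × Fin dB) ℂ) :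
    Matrix (Fin dA) (Fin dA) ℂ :=
  fun i k => ∑ j, ρ (i, j) (k, j)

def trA {dA dB : ℕ} (ρ : Matrix (Fin dA × Fin dB) (Fin dA × Fin dB) ℂ) :
    Matrix (Fin dB) (Fin dB) ℂ :=
  fun j l => ∑ i, ρ (i, j) (i, l)

def nlog2 (x : ℝ) : ℝ := -(x * Real.logb 2 x)

def binEnt (p : ℝ) : ℝ := nlog2 p + nlog2 (1 - p)

def vN {n : Type*} [Fintype n] [DecidableEq n] (ρ : Matrix n n ℂ) : ℝ :=
  if h : ρ.IsHermitian then ∑ i, nlog2 (h.eigenvalues i) else 0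

def mutInfo {dA dB : ℕ} (ρ : Matrix (Fin dA × Fin dB) (Fin dA × Fin dB) ℂ) : ℝ :=
  vN (trB ρ) + vN (trA ρ) - vN ρ

def traceNorm {n : Type*} [Fintype n] [DecidableEq n] (X : Matrix n n ℂ) : ℝ :=
  if h : X.IsHermitian then ∑ i, |h.eigenvalues i| else 0

def mlog {n : Type*} [Fintype n] [DecidableEq n] (A : Matrix n n ℂ) : Matrix n n ℂ :=
  if h : A.IsHermitian then
    (h.eigenvectorUnitary : Matrix n n ℂ) *
      Matrix.diagonal (fun i => ((Real.logb 2 (h.eigenvalues i) : ℝ) : ℂ)) *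
      (star (h.eigenvectorUnitary : Matrix n n ℂ))
  else 0

def qRelEnt {n : Type*} [Fintype n] [DecidableEq n] (ρ σ : Matrix n n ℂ) : ℝ :=
  ((ρ * mlog ρ - ρ * mlog σ).trace).re

def tpow {m : Type*} [Fintype m] (ρ : Matrix m m ℂ) (n : ℕ) :
    Matrix (Fin n → m) (Fin n → m) ℂ :=
  fun f g => ∏ i, ρ (f i) (g i)

def klDiv2 {ι : Type*} [Fintype ι] (p q : ι → ℝ) : ℝ :=
  ∑ i, p i * Real.logb 2 (p i / q i)

def phiVec (d : ℕ) : Fin d × Fin d → ℂ :=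
  fun p => if p.1 = p.2 then (Complex.ofReal (Real.sqrt d))⁻¹ else 0

def twistU {d : ℕ} {n' : Type*} (Ui : Fin d → Matrix n' n' ℂ) :
    Matrix (Fin d × (Fin d × n')) (Fin d × (Fin d × n')) ℂ :=
  fun p q => if p.1 = p.2.1 ∧ q.1 = q.2.1 ∧ p.1 = q.1 then Ui p.1 p.2.2 q.2.2 else 0

def ctrlW {d : ℕ} {n' : Type*} (W : Fin d → Matrix (Fin d × n') (Fin d × n') ℂ) :
    Matrix (Fin d × (Fin d × n')) (Fin d × (Fin d × n')) ℂ :=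
  fun p q => if p.1 = q.1 then W p.1 p.2 q.2 else 0

def psiProjTensor (d : ℕ) {n' : Type*} (σ : Matrix n' n' ℂ) :
    Matrix (Fin d × (Fin d × n')) (Fin d × (Fin d × n')) ℂ :=
  fun p q => if p.1 = p.2.1 ∧ q.1 = q.2.1 then (d : ℂ)⁻¹ * σ p.2.2 q.2.2 else 0

def plusZeroTensor {d : ℕ} (hd : 0 < d) {n' : Type*} (σ : Matrix n' n' ℂ) :
    Matrix (Fin d × (Fin d × n')) (Fin d × (Fin d × n')) ℂ :=
  fun p q =>
    if p.2.1 = (⟨0, hd⟩ : Fin d) ∧ q.2.1 = (⟨0, hd⟩ : Fin d) then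
      (d : ℂ)⁻¹ * σ p.2.2 q.2.2
    else 0

theorem private_state_is_independent_state (d : ℕ) (hd : 0 < d)
    (n' : Type*) [Fintype n'] [DecidableEq n']
    (Ui : Fin d → Matrix n' n' ℂ)
    (hUi : ∀ i, Ui i ∈ Matrix.unitaryGroup n' ℂ)
    (σ : Matrix n' n' ℂ) (hσ : σ.PosSemidef) (hσ1 : σ.trace = 1) :
    ∃ W : Fin d → Matrix (Fin d × n') (Fin d × n') ℂ,
      (∀ i, W i ∈ Matrix.unitaryGroup (Fin d × n') ℂ) ∧
      twistU Ui * psiProjTensor d σ * (twistU Ui)ᴴ =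
        ctrlW W * plusZeroTensor hd σ * (ctrlW W)ᴴ := by
  haveI : NeZero d := ⟨hd.ne'⟩
  classical
  refine ⟨fun i p q => if p.1 = q.1 + i then Ui i p.2 q.2 else 0, ?_, ?_⟩
  · intro i
    refine Matrix.mem_unitaryGroup_iff.mpr ?_
    show Matrix.of (fun p q : Fin d × n' => if p.1 = q.1 + i then Ui i p.2 q.2 else 0) *
      star (Matrix.of (fun p q : Fin d × n' => if p.1 = q.1 + i then Ui i p.2 q.2 else 0)) = 1
    have h1 : Ui i * (Ui i)ᴴ = 1 := Matrix.mem_unitaryGroup_iff.mp (hUi i)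
    ext p q
    have hcond : ∀ (x : Fin d) (k : Fin d), (x = k + i) ↔ (k = x - i) :=
      fun x k => (eq_sub_iff_add_eq.trans eq_comm).symm
    simp only [Matrix.mul_apply, Matrix.star_apply, Matrix.of_apply, Fintype.sum_prod_type, hcond,
      ite_mul, mul_ite, zero_mul, mul_zero, star_zero,
      Finset.sum_ite_eq', Finset.mem_univ, if_true]
    rw [Finset.sum_comm]
    simp only [Finset.sum_ite_eq', Finset.mem_univ, if_true, sub_left_inj]
    by_cases h : p.1 = q.1
    · have h2 := congrFun (congrFun h1 p.2) q.2
      simp only [Matrix.mul_apply, Matrix.conjTranspose_apply] at h2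
      simp only [h, if_true, h2]
      simp [Matrix.one_apply, Prod.ext_iff, h]
    · simp [Matrix.one_apply, Prod.ext_iff, h]
  · ext p q
    simp only [Matrix.mul_apply, Matrix.conjTranspose_apply, twistU, psiProjTensor,
      ctrlW, plusZeroTensor, Fintype.sum_prod_type]
    simp only [ite_and, ite_mul, mul_ite, zero_mul, mul_zero, apply_ite (star : ℂ → ℂ),
      star_zero, Finset.sum_ite_irrel, Finset.sum_const_zero, Finset.sum_ite_eq,
      Finset.sum_ite_eq', Finset.mem_univ, if_true]
    simp only [show (⟨0, hd⟩ : Fin d) = 0 from rfl, zero_add]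
    rw [Finset.sum_eq_single (0 : Fin d)]
    · simp only [if_true, eq_self_iff_true]
      by_cases h1 : q.1 = q.2.1 <;> by_cases h2 : p.1 = p.2.1 <;>
        simp [h1, h2, eq_comm]
    · intro b _ hb
      simp [hb]
    · simp


end
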